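/- For any nonzero real number a and any positive integer n, ∑_{k=1}^{⌊n/2⌋} C(2n,4k) E_{2n-4k,a} (a(-4)^k + 2(1-a)) = (-1)^n - (1/a) E_{2n,a}. -/

import Mathlib

open Finset

noncomputable def E (a : ℝ) : ℕ → ℝ
  | 0 => 1
  | n + 1 =>
      -a * ∑ k ∈ (Finset.Icc 1 ((n + 1) / 2)).attach,
        ((n + 1).choose (2 * k.1) : ℝ) * E a (n + 1 - 2 * k.1)
  decreasing_by
    have h := Finset.mem_Icc.mp k.2
    omega

noncomputable def EP (a : ℝ) (n : ℕ) (x : ℝ) : ℝ :=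
  ∑ k ∈ Finset.range (n + 1), (n.choose k : ℝ) * E a k * x ^ (n - k)

/- ## Auxiliary machinery -/

lemma E_rec (a : ℝ) (m : ℕ) (hm : 1 ≤ m) :
    E a m = -a * ∑ k ∈ Finset.Icc 1 (m / 2), (m.choose (2 * k) : ℝ) * E a (m - 2 * k) := by
  obtain ⟨n, rfl⟩ := Nat.exists_eq_add_of_le hm
  rw [Nat.add_comm, E]
  rw [Finset.sum_attach (Finset.Icc 1 ((n + 1) / 2))
    (fun k => (((n+1).choose (2*k) : ℕ) : ℝ) * E a (n + 1 - 2 * k))]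

noncomputable def Asum (l : ℕ) : ℝ := ∑ i ∈ Finset.range (l+1), (-1:ℝ)^i * ((2*l).choose (2*i) : ℝ)
noncomputable def Bsum (l : ℕ) : ℝ := ∑ i ∈ Finset.range (l+1), (-1:ℝ)^i * ((2*l).choose (2*i+1) : ℝ)

lemma shift_sum (f : ℕ → ℝ) (l : ℕ) :
    ∑ i ∈ Finset.range (l+1), (-1:ℝ)^i * f i
      = f 0 - ∑ i ∈ Finset.range l, (-1:ℝ)^i * f (i+1) := by
  rw [Finset.sum_range_succ' (fun i => (-1:ℝ)^i * f i) l]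
  rw [show (∑ i ∈ Finset.range l, (-1:ℝ)^(i+1) * f (i+1))
      = -∑ i ∈ Finset.range l, (-1:ℝ)^i * f (i+1) from by
    rw [← Finset.sum_neg_distrib]; exact Finset.sum_congr rfl fun i _ => by ring]
  ring

lemma pascal2 (m k : ℕ) : ((m+2).choose (k+2) : ℝ)
    = (m.choose k : ℝ) + 2 * (m.choose (k+1) : ℝ) + (m.choose (k+2) : ℝ) := by
  rw [Nat.choose_succ_succ (m+1) (k+1), Nat.choose_succ_succ m k, Nat.choose_succ_succ m (k+1)]
  push_cast; ring

lemma hS2 (l : ℕ) : ∑ i ∈ Finset.range l, (-1:ℝ)^i * ((2*l).choose (2*i+2) : ℝ) = 1 - Asum l := by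
  have e := shift_sum (fun i => ((2*l).choose (2*i) : ℝ)) l
  rw [Finset.sum_congr rfl (fun i _ => by rw [show 2*(i+1) = 2*i+2 by ring] :
    ∀ i ∈ Finset.range l, (-1:ℝ)^i * ((2*l).choose (2*(i+1)) : ℝ) = (-1:ℝ)^i * ((2*l).choose (2*i+2) : ℝ))] at e
  have : Asum l = ((2*l).choose 0 : ℝ) - ∑ i ∈ Finset.range l, (-1:ℝ)^i * ((2*l).choose (2*i+2) : ℝ) := e
  simp [Nat.choose_zero_right] at this
  linarith

lemma hS3 (l : ℕ) : ∑ i ∈ Finset.range l, (-1:ℝ)^i * ((2*l).choose (2*i+1) : ℝ) = Bsum l := by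
  unfold Bsum
  rw [Finset.sum_range_succ, Nat.choose_eq_zero_of_lt (by omega)]
  simp

lemma hS4 (l : ℕ) : ∑ i ∈ Finset.range l, (-1:ℝ)^i * ((2*l).choose (2*i+3) : ℝ) = 2*l - Bsum l := by
  have e := shift_sum (fun i => ((2*l).choose (2*i+1) : ℝ)) l
  rw [Finset.sum_congr rfl (fun i _ => by rw [show 2*(i+1)+1 = 2*i+3 by ring] :
    ∀ i ∈ Finset.range l, (-1:ℝ)^i * ((2*l).choose (2*(i+1)+1) : ℝ) = (-1:ℝ)^i * ((2*l).choose (2*i+3) : ℝ))] at e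
  have : Bsum l = ((2*l).choose 1 : ℝ) - ∑ i ∈ Finset.range l, (-1:ℝ)^i * ((2*l).choose (2*i+3) : ℝ) := e
  rw [Nat.choose_one_right] at this
  push_cast at this
  linarith

lemma Asum_succ (l : ℕ) : Asum (l+1) = -2 * Bsum l := by
  have e := shift_sum (fun i => ((2*(l+1)).choose (2*i) : ℝ)) (l+1)
  have hp : ∀ i ∈ Finset.range (l+1), (-1:ℝ)^i * ((2*(l+1)).choose (2*(i+1)) : ℝ)
      = (-1:ℝ)^i * ((2*l).choose (2*i) : ℝ) + 2 * ((-1:ℝ)^i * ((2*l).choose (2*i+1) : ℝ))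
        + (-1:ℝ)^i * ((2*l).choose (2*i+2) : ℝ) := by
    intro i _
    rw [show 2*(l+1) = 2*l+2 by ring, show 2*(i+1) = 2*i+2 by ring, pascal2 (2*l) (2*i)]
    ring
  rw [Finset.sum_congr rfl hp] at e
  rw [Finset.sum_add_distrib, Finset.sum_add_distrib, ← Finset.mul_sum] at e
  rw [Finset.sum_range_succ (fun i => (-1:ℝ)^i * ((2*l).choose (2*i+2) : ℝ)) l] at e
  rw [Nat.choose_eq_zero_of_lt (show 2*l < 2*l+2 by omega)] at e
  have hA : Asum (l+1) = ((2*(l+1)).choose 0 : ℝ)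
      - ((Asum l) + 2 * (Bsum l) + ((∑ i ∈ Finset.range l, (-1:ℝ)^i * ((2*l).choose (2*i+2) : ℝ)) + (-1:ℝ)^l * (0:ℕ))) := e
  rw [hS2 l] at hA
  simp [Nat.choose_zero_right] at hA
  linarith

lemma Bsum_succ (l : ℕ) : Bsum (l+1) = 2 * Asum l := by
  have hB1 : Bsum (l+1) = ∑ i ∈ Finset.range (l+1), (-1:ℝ)^i * ((2*(l+1)).choose (2*i+1) : ℝ) := by
    unfold Bsum
    rw [Finset.sum_range_succ, Nat.choose_eq_zero_of_lt (by omega)]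
    simp
  have e := shift_sum (fun i => ((2*(l+1)).choose (2*i+1) : ℝ)) l
  have hp : ∀ i ∈ Finset.range l, (-1:ℝ)^i * ((2*(l+1)).choose (2*(i+1)+1) : ℝ)
      = (-1:ℝ)^i * ((2*l).choose (2*i+1) : ℝ) + 2 * ((-1:ℝ)^i * ((2*l).choose (2*i+2) : ℝ))
        + (-1:ℝ)^i * ((2*l).choose (2*i+3) : ℝ) := by
    intro i _
    rw [show 2*(l+1) = 2*l+2 by ring, show 2*(i+1)+1 = (2*i+1)+2 by ring, pascal2 (2*l) (2*i+1)]
    rw [show 2*i+1+1 = 2*i+2 by ring, show 2*i+1+2 = 2*i+3 by ring]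
    ring
  rw [Finset.sum_congr rfl hp] at e
  rw [Finset.sum_add_distrib, Finset.sum_add_distrib, ← Finset.mul_sum] at e
  rw [hS3 l, hS2 l, hS4 l] at e
  rw [hB1, e]
  rw [Nat.choose_one_right]
  push_cast; ring

lemma Asum_pair : ∀ k, Asum (2*k) = (-4:ℝ)^k ∧ Asum (2*k+1) = 0 := by
  intro k
  induction k with
  | zero =>
    constructor
    · simp [Asum]
    · rw [show 2*0+1 = 0+1 by ring, Asum_succ]
      simp [Bsum]
  | succ k ih =>
    have h1 : Asum (2*(k+1)) = -2 * Bsum (2*k+1) := by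
      rw [show 2*(k+1) = (2*k+1)+1 by ring, Asum_succ]
    have h2 : Bsum (2*k+1) = 2 * Asum (2*k) := by
      rw [show 2*k+1 = (2*k)+1 by ring, Bsum_succ]
    constructor
    · rw [h1, h2, ih.1]; ring
    · rw [show 2*(k+1)+1 = (2*(k+1))+1 by ring, Asum_succ,
        show 2*(k+1) = (2*k+1)+1 by ring, Bsum_succ, ih.2]
      ring

lemma Asum_eq (l : ℕ) : Asum l = if l % 2 = 0 then (-4:ℝ)^(l/2) else 0 := by
  rcases Nat.even_or_odd l with h | h
  · obtain ⟨k, rfl⟩ := h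
    rw [show k + k = 2*k from by ring, (Asum_pair k).1, if_pos (by omega)]
    congr 1
    omega
  · obtain ⟨k, rfl⟩ := h
    rw [(Asum_pair k).2, if_neg (by omega)]

lemma even_reindex (N : ℕ) (g : ℕ → ℝ) :
    ∑ l ∈ Finset.range (N+1), (if l % 2 = 0 then g l else 0)
      = ∑ k ∈ Finset.range (N/2+1), g (2*k) := by
  rw [← Finset.sum_filter]
  refine Finset.sum_nbij' (fun l => l/2) (fun k => 2*k) ?_ ?_ ?_ ?_ ?_
  · intro l hl
    simp only [Finset.mem_filter, Finset.mem_range] at hl ⊢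
    omega
  · intro k hk
    simp only [Finset.mem_filter, Finset.mem_range] at hk ⊢
    omega
  · intro l hl
    simp only [Finset.mem_filter, Finset.mem_range] at hl
    show 2 * (l / 2) = l
    omega
  · intro k _
    show (2 * k) / 2 = k
    omega
  · intro l hl
    simp only [Finset.mem_filter, Finset.mem_range] at hl
    show g l = g (2 * (l / 2))
    congr 1
    omega

lemma peel (N : ℕ) (f : ℕ → ℝ) :
    ∑ k ∈ Finset.range (N+1), f k = f 0 + ∑ k ∈ Finset.Icc 1 N, f k := by
  rw [show Finset.range (N+1) = insert 0 (Finset.Icc 1 N) from by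
    ext x; simp [Finset.mem_Icc, Finset.mem_range]; omega]
  rw [Finset.sum_insert (by simp)]

theorem stmt14 (a : ℝ) (ha : a ≠ 0) (n : ℕ) (hn : 1 ≤ n) :
    ∑ k ∈ Finset.Icc 1 (n / 2), ((2 * n).choose (4 * k) : ℝ) * E a (2 * n - 4 * k) *
        (a * (-4) ^ k + 2 * (1 - a)) = (-1) ^ n - 1 / a * E a (2 * n) := by
  -- the recurrence in "full-sum" form
  have star : ∀ m : ℕ, 1 ≤ m →
      a * ∑ j ∈ Finset.range (m/2+1), ((m.choose (2*j) : ℝ) * E a (m - 2*j))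
        + (1-a) * E a m = 0 := by
    intro m hm
    rw [peel (m/2) (fun j => ((m.choose (2*j) : ℝ) * E a (m - 2*j)))]
    simp only [Nat.mul_zero, Nat.choose_zero_right, Nat.cast_one, one_mul, Nat.sub_zero]
    rw [E_rec a m hm]
    ring
  -- the big alternating sum of the recurrence
  have big : ∑ i ∈ Finset.range (n+1), (-1:ℝ)^i * (((2*n).choose (2*i) : ℝ) *
      (a * ∑ j ∈ Finset.range ((n-i)+1), (((2*n-2*i).choose (2*j) : ℝ) * E a (2*n-2*i - 2*j))
        + (1-a) * E a (2*n-2*i)))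
      = (-1:ℝ)^n := by
    rw [Finset.sum_eq_single n]
    · rw [show 2*n-2*n = 0 from by omega, show n - n = 0 from by omega]
      have hE0 : E a 0 = 1 := by rw [E]
      have hsum : ∑ j ∈ Finset.range 1, (((0:ℕ).choose (2*j) : ℝ) * E a (0 - 2*j)) = 1 := by
        rw [Finset.sum_range_one]
        simp [hE0]
      rw [hsum, hE0, Nat.choose_self]
      push_cast
      ring
    · intro i hi hne
      have hi' : i < n := by
        simp only [Finset.mem_range] at hi; omega
      rw [show (n-i)+1 = (2*n-2*i)/2+1 from by omega]
      rw [star (2*n-2*i) (by omega)]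
      ring
    · intro h
      exact absurd (Finset.mem_range.mpr (by omega)) h
  -- expand into a * D + (1-a) * W
  have expand : ∑ i ∈ Finset.range (n+1), (-1:ℝ)^i * (((2*n).choose (2*i) : ℝ) *
      (a * ∑ j ∈ Finset.range ((n-i)+1), (((2*n-2*i).choose (2*j) : ℝ) * E a (2*n-2*i - 2*j))
        + (1-a) * E a (2*n-2*i)))
      = a * ∑ i ∈ Finset.range (n+1), ∑ j ∈ Finset.range ((n-i)+1),
          (-1:ℝ)^i * (((2*n).choose (2*i) : ℝ) * (((2*n-2*i).choose (2*j) : ℝ) * E a (2*n-2*i - 2*j)))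
        + (1-a) * ∑ i ∈ Finset.range (n+1), (-1:ℝ)^i * (((2*n).choose (2*i) : ℝ) * E a (2*n-2*i)) := by
    have h1 : ∀ i ∈ Finset.range (n+1), (-1:ℝ)^i * (((2*n).choose (2*i) : ℝ) *
        (a * ∑ j ∈ Finset.range ((n-i)+1), (((2*n-2*i).choose (2*j) : ℝ) * E a (2*n-2*i - 2*j))
          + (1-a) * E a (2*n-2*i)))
        = a * (∑ j ∈ Finset.range ((n-i)+1),
            (-1:ℝ)^i * (((2*n).choose (2*i) : ℝ) * (((2*n-2*i).choose (2*j) : ℝ) * E a (2*n-2*i - 2*j))))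
          + (1-a) * ((-1:ℝ)^i * (((2*n).choose (2*i) : ℝ) * E a (2*n-2*i))) := by
      intro i _
      have hs : (-1:ℝ)^i * (((2*n).choose (2*i) : ℝ) * ∑ j ∈ Finset.range ((n-i)+1),
            (((2*n-2*i).choose (2*j) : ℝ) * E a (2*n-2*i - 2*j)))
          = ∑ j ∈ Finset.range ((n-i)+1),
            (-1:ℝ)^i * (((2*n).choose (2*i) : ℝ) * (((2*n-2*i).choose (2*j) : ℝ) * E a (2*n-2*i - 2*j))) := by
        rw [Finset.mul_sum, Finset.mul_sum]
      rw [← hs]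
      ring
    rw [Finset.sum_congr rfl h1, Finset.sum_add_distrib, ← Finset.mul_sum, ← Finset.mul_sum]
  -- reindex the double sum
  have hD : ∑ i ∈ Finset.range (n+1), ∑ j ∈ Finset.range ((n-i)+1),
        (-1:ℝ)^i * (((2*n).choose (2*i) : ℝ) * (((2*n-2*i).choose (2*j) : ℝ) * E a (2*n-2*i - 2*j)))
      = ∑ l ∈ Finset.range (n+1), ∑ i ∈ Finset.range (l+1),
        (-1:ℝ)^i * (((2*l).choose (2*i) : ℝ) * (((2*n).choose (2*l) : ℝ) * E a (2*n-2*l))) := by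
    rw [Finset.sum_sigma', Finset.sum_sigma']
    refine Finset.sum_nbij' (fun p => ⟨p.1 + p.2, p.1⟩) (fun q => ⟨q.2, q.1 - q.2⟩) ?_ ?_ ?_ ?_ ?_
    · rintro ⟨i, j⟩ hp
      simp only [Finset.mem_sigma, Finset.mem_range] at hp ⊢
      omega
    · rintro ⟨l, i⟩ hq
      simp only [Finset.mem_sigma, Finset.mem_range] at hq ⊢
      omega
    · rintro ⟨i, j⟩ hp
      simp only [Finset.mem_sigma, Finset.mem_range] at hp
      simp only [Sigma.mk.inj_iff, heq_eq_eq, true_and, and_true]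
      omega
    · rintro ⟨l, i⟩ hq
      simp only [Finset.mem_sigma, Finset.mem_range] at hq
      simp only [Sigma.mk.inj_iff, heq_eq_eq, true_and, and_true]
      omega
    · rintro ⟨i, j⟩ hp
      simp only [Finset.mem_sigma, Finset.mem_range] at hp
      have h1 : 2*(i+j) ≤ 2*n := by omega
      have h2 : 2*i ≤ 2*(i+j) := by omega
      have hc := Nat.choose_mul (n := 2*n) h2
      rw [show 2*(i+j) - 2*i = 2*j from by omega] at hc
      have hc' : (((2*n).choose (2*(i+j)) : ℝ)) * (((2*(i+j)).choose (2*i) : ℝ))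
          = (((2*n).choose (2*i) : ℝ)) * (((2*n-2*i).choose (2*j) : ℝ)) := by
        exact_mod_cast congrArg (Nat.cast : ℕ → ℝ) hc
      rw [show 2*n - 2*(i+j) = 2*n-2*i-2*j from by omega]
      calc (-1:ℝ)^i * (((2*n).choose (2*i) : ℝ) * (((2*n-2*i).choose (2*j) : ℝ) * E a (2*n-2*i - 2*j)))
          = ((((2*n).choose (2*i) : ℝ)) * (((2*n-2*i).choose (2*j) : ℝ))) * ((-1:ℝ)^i * E a (2*n-2*i-2*j)) := by ring
        _ = ((((2*n).choose (2*(i+j)) : ℝ)) * (((2*(i+j)).choose (2*i) : ℝ))) * ((-1:ℝ)^i * E a (2*n-2*i-2*j)) := by rw [hc']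
        _ = (-1:ℝ)^i * (((2*(i+j)).choose (2*i) : ℝ) * (((2*n).choose (2*(i+j)) : ℝ) * E a (2*n-2*i-2*j))) := by ring
  -- inner sums are Asum
  have hD2 : ∑ l ∈ Finset.range (n+1), ∑ i ∈ Finset.range (l+1),
        (-1:ℝ)^i * (((2*l).choose (2*i) : ℝ) * (((2*n).choose (2*l) : ℝ) * E a (2*n-2*l)))
      = ∑ k ∈ Finset.range (n/2+1),
        (-4:ℝ)^k * (((2*n).choose (4*k) : ℝ) * E a (2*n-4*k)) := by
    have step1 : ∀ l ∈ Finset.range (n+1), ∑ i ∈ Finset.range (l+1),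
        (-1:ℝ)^i * (((2*l).choose (2*i) : ℝ) * (((2*n).choose (2*l) : ℝ) * E a (2*n-2*l)))
        = (if l % 2 = 0 then (-4:ℝ)^(l/2) * (((2*n).choose (2*l) : ℝ) * E a (2*n-2*l)) else 0) := by
      intro l _
      have : ∑ i ∈ Finset.range (l+1),
          (-1:ℝ)^i * (((2*l).choose (2*i) : ℝ) * (((2*n).choose (2*l) : ℝ) * E a (2*n-2*l)))
          = Asum l * (((2*n).choose (2*l) : ℝ) * E a (2*n-2*l)) := by
        unfold Asum
        rw [Finset.sum_mul]
        exact Finset.sum_congr rfl fun i _ => by ring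
      rw [this, Asum_eq l]
      split <;> simp
    rw [Finset.sum_congr rfl step1]
    rw [even_reindex n (fun l => (-4:ℝ)^(l/2) * (((2*n).choose (2*l) : ℝ) * E a (2*n-2*l)))]
    refine Finset.sum_congr rfl fun k _ => ?_
    rw [show (2*k)/2 = k from by omega, show 2*n - 2*(2*k) = 2*n - 4*k from by omega,
      show 2*(2*k) = 4*k from by ring]
  -- main identity: a*T0 + (1-a)*W = (-1)^n
  have key : a * ∑ k ∈ Finset.range (n/2+1), (-4:ℝ)^k * (((2*n).choose (4*k) : ℝ) * E a (2*n-4*k))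
      + (1-a) * ∑ i ∈ Finset.range (n+1), (-1:ℝ)^i * (((2*n).choose (2*i) : ℝ) * E a (2*n-2*i))
      = (-1:ℝ)^n := by
    rw [← hD2, ← hD, ← expand, big]
  -- V identity
  have hV : a * ∑ j ∈ Finset.range (n+1), (((2*n).choose (2*j) : ℝ) * E a (2*n - 2*j))
      + (1-a) * E a (2*n) = 0 := by
    have := star (2*n) (by omega)
    rw [show (2*n)/2 = n from by omega] at this
    exact this
  -- W + V = 2*U0
  have hWV : (∑ i ∈ Finset.range (n+1), (-1:ℝ)^i * (((2*n).choose (2*i) : ℝ) * E a (2*n-2*i)))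
      + (∑ j ∈ Finset.range (n+1), (((2*n).choose (2*j) : ℝ) * E a (2*n - 2*j)))
      = 2 * ∑ k ∈ Finset.range (n/2+1), (((2*n).choose (4*k) : ℝ) * E a (2*n-4*k)) := by
    rw [← Finset.sum_add_distrib]
    have step : ∀ i ∈ Finset.range (n+1),
        (-1:ℝ)^i * (((2*n).choose (2*i) : ℝ) * E a (2*n-2*i)) + (((2*n).choose (2*i) : ℝ) * E a (2*n - 2*i))
        = (if i % 2 = 0 then 2 * (((2*n).choose (2*i) : ℝ) * E a (2*n-2*i)) else 0) := by
      intro i _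
      rcases Nat.even_or_odd i with h | h
      · rw [h.neg_one_pow, if_pos (Nat.even_iff.mp h)]; ring
      · rw [h.neg_one_pow, if_neg (by rw [Nat.odd_iff] at h; omega)]; ring
    rw [Finset.sum_congr rfl step]
    rw [even_reindex n (fun l => 2 * (((2*n).choose (2*l) : ℝ) * E a (2*n-2*l)))]
    rw [Finset.mul_sum]
    refine Finset.sum_congr rfl fun k _ => ?_
    rw [show 2*n - 2*(2*k) = 2*n - 4*k from by omega, show 2*(2*k) = 4*k from by ring]
  -- peel off the k = 0 terms
  have hTpeel : ∑ k ∈ Finset.range (n/2+1), (-4:ℝ)^k * (((2*n).choose (4*k) : ℝ) * E a (2*n-4*k))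
      = E a (2*n) + ∑ k ∈ Finset.Icc 1 (n/2), (-4:ℝ)^k * (((2*n).choose (4*k) : ℝ) * E a (2*n-4*k)) := by
    rw [peel (n/2) (fun k => (-4:ℝ)^k * (((2*n).choose (4*k) : ℝ) * E a (2*n-4*k)))]
    norm_num
  have hUpeel : ∑ k ∈ Finset.range (n/2+1), (((2*n).choose (4*k) : ℝ) * E a (2*n-4*k))
      = E a (2*n) + ∑ k ∈ Finset.Icc 1 (n/2), (((2*n).choose (4*k) : ℝ) * E a (2*n-4*k)) := by
    rw [peel (n/2) (fun k => (((2*n).choose (4*k) : ℝ) * E a (2*n-4*k)))]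
    norm_num
  -- rewrite the goal
  have goal_eq : ∑ k ∈ Finset.Icc 1 (n / 2), ((2 * n).choose (4 * k) : ℝ) * E a (2 * n - 4 * k) *
        (a * (-4) ^ k + 2 * (1 - a))
      = a * ∑ k ∈ Finset.Icc 1 (n/2), (-4:ℝ)^k * (((2*n).choose (4*k) : ℝ) * E a (2*n-4*k))
        + (2 - 2*a) * ∑ k ∈ Finset.Icc 1 (n/2), (((2*n).choose (4*k) : ℝ) * E a (2*n-4*k)) := by
    rw [Finset.mul_sum, Finset.mul_sum, ← Finset.sum_add_distrib]
    exact Finset.sum_congr rfl fun k _ => by ring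
  rw [goal_eq]
  apply mul_left_cancel₀ ha
  rw [mul_sub, ← mul_assoc, mul_one_div_cancel ha, one_mul]
  linear_combination (-(a^2)) * hTpeel + (-(2*a - 2*a^2)) * hUpeel + a * key + (a^2 - a) * hWV + (1-a) * hV
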